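/- Let r, t be positive integers, Σ an r×t real rectangular diagonal matrix with nonnegative diagonal entries, and ε > 0. Then for every complex r×t matrix Δ with spectral norm ‖Δ‖₂ ≤ ε, the (nonnegative real) determinant of the t×t positive semidefinite matrix (Σ+Δ)ᴴ(Σ+Δ) satisfies det[(Σ+Δ)ᴴ(Σ+Δ)] ≥ ∏_{j=1}^{t} max{ςⱼⱼ − ε, 0}², where ςⱼⱼ := 0 for min(r,t) < j ≤ t. -/

import Mathlib

open Matrix
open InnerProductSpace

/-- The spectral norm (ℓ²→ℓ² operator norm, i.e. largest singular value) of a complex matrix. -/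
noncomputable def specNorm {m n : ℕ} (A : Matrix (Fin m) (Fin n) ℂ) : ℝ :=
  ‖LinearMap.toContinuousLinearMap (Matrix.toEuclideanLin A)‖

/-- The `j`-th diagonal entry of a rectangular matrix, extended by `0` out of range. -/
noncomputable def diagEntry {r t : ℕ} (S : Matrix (Fin r) (Fin t) ℝ) (j : ℕ) : ℝ :=
  if h : j < r ∧ j < t then S ⟨j, h.1⟩ ⟨j, h.2⟩ else 0

instance (n : ℕ) : WellFoundedLT (Fin n) := IsWellOrder.toIsWellFounded

local notation "⟪" x ", " y "⟫" => @inner ℂ _ _ x y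

lemma gram_det {E : Type*} [NormedAddCommGroup E] [InnerProductSpace ℂ E]
    {n : ℕ} (f : Fin n → E) :
    (Matrix.of fun i j : Fin n => (⟪f i, f j⟫ : ℂ)).det
      = ∏ j : Fin n, ((‖gramSchmidt ℂ f j‖ : ℂ) ^ 2) := by
  classical
  set g : Fin n → E := gramSchmidt ℂ f with hg
  set M : Matrix (Fin n) (Fin n) ℂ := Matrix.of fun i j =>
    if i = j then 1 else if i < j then ⟪g i, f j⟫ / (‖g i‖ : ℂ) ^ 2 else 0 with hM
  have hrepr : ∀ j, f j = ∑ i, M i j • g i := by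
    intro j
    have h1 : ∑ i, M i j • g i
        = M j j • g j + ∑ i ∈ Finset.univ.erase j, M i j • g i :=
      (Finset.add_sum_erase _ _ (Finset.mem_univ j)).symm
    have h2 : ∑ i ∈ Finset.univ.erase j, M i j • g i
        = ∑ i ∈ Finset.Iio j, M i j • g i := by
      refine (Finset.sum_subset ?_ ?_).symm
      · intro i hi
        exact Finset.mem_erase.2 ⟨(Finset.mem_Iio.1 hi).ne, Finset.mem_univ i⟩
      · intro i hi hni
        have h3 : ¬ i < j := by simpa using hni
        have hij : i ≠ j := (Finset.mem_erase.1 hi).1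
        simp [hM, hij, h3]
    have hMjj : M j j = 1 := by simp [hM]
    have h3 : ∑ i ∈ Finset.Iio j, M i j • g i
        = ∑ i ∈ Finset.Iio j, (⟪g i, f j⟫ / (‖g i‖ : ℂ) ^ 2) • g i := by
      refine Finset.sum_congr rfl fun i hi => ?_
      have hij : i < j := Finset.mem_Iio.1 hi
      simp [hM, hij, hij.ne]
    rw [h1, h2, hMjj, one_smul, h3]
    exact gramSchmidt_def'' ℂ f j
  have hGram : (Matrix.of fun i j : Fin n => (⟪f i, f j⟫ : ℂ))
      = Mᴴ * (Matrix.diagonal fun i => (‖g i‖ : ℂ) ^ 2) * M := by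
    ext a b
    have hR : (Mᴴ * (Matrix.diagonal fun i => (‖g i‖ : ℂ) ^ 2) * M) a b
        = ∑ k, star (M k a) * ((‖g k‖ : ℂ) ^ 2) * M k b := by
      rw [Matrix.mul_apply]
      refine Finset.sum_congr rfl fun k _ => ?_
      rw [Matrix.mul_diagonal, Matrix.conjTranspose_apply]
    rw [hR]
    show (⟪f a, f b⟫ : ℂ) = _
    rw [hrepr a, hrepr b, sum_inner]
    refine Finset.sum_congr rfl fun i _ => ?_
    rw [inner_sum]
    rw [Finset.sum_eq_single i]
    · rw [inner_smul_left, inner_smul_right, inner_self_eq_norm_sq_to_K,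
        RCLike.star_def]
      ring_nf
      rfl
    · intro k _ hk
      rw [inner_smul_left, inner_smul_right,
        gramSchmidt_orthogonal ℂ f (Ne.symm hk)]
      ring
    · intro h; exact absurd (Finset.mem_univ i) h
  have hMdet : M.det = 1 := by
    have ht : M.BlockTriangular id := by
      intro i j hij
      simp only [id] at hij
      have h1 : i ≠ j := ne_of_gt hij
      have h2 : ¬ i < j := not_lt.2 hij.le
      simp [hM, h1, h2]
    rw [Matrix.det_of_upperTriangular ht]
    simp [hM]
  rw [hGram, Matrix.det_mul, Matrix.det_mul, Matrix.det_conjTranspose, hMdet,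
    Matrix.det_diagonal]
  simp

set_option maxHeartbeats 2000000 in
theorem stmt3 (r t : ℕ) (hr : 0 < r) (ht : 0 < t)
    (Sig : Matrix (Fin r) (Fin t) ℝ)
    (hSdiag : ∀ (i : Fin r) (j : Fin t), (i : ℕ) ≠ (j : ℕ) → Sig i j = 0)
    (hSpos : ∀ j, 0 ≤ diagEntry Sig j)
    (ε : ℝ) (hε : 0 < ε)
    (Δ : Matrix (Fin r) (Fin t) ℂ) (hΔ : specNorm Δ ≤ ε) :
    let SigC : Matrix (Fin r) (Fin t) ℂ := Sig.map Complex.ofReal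
    0 ≤ (((SigC + Δ)ᴴ * (SigC + Δ)).det).re ∧
    (((SigC + Δ)ᴴ * (SigC + Δ)).det).im = 0 ∧
    (∏ j : Fin t, max (diagEntry Sig j - ε) 0 ^ 2) ≤ (((SigC + Δ)ᴴ * (SigC + Δ)).det).re := by
  intro SigC
  classical
  set ς : Fin t → ℝ := fun j => diagEntry Sig (j : ℕ) with hςdef
  set A : Matrix (Fin r) (Fin t) ℂ := SigC + Δ with hA
  set col : Fin t → EuclideanSpace ℂ (Fin r) :=
    fun j => (WithLp.equiv 2 (Fin r → ℂ)).symm (fun i => A i j) with hcol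
  set σ : Equiv.Perm (Fin t) := Tuple.sort (fun j => -ς j) with hσ
  have hmono : ∀ {i j : Fin t}, i ≤ j → ς (σ j) ≤ ς (σ i) := by
    intro i j hij
    have h := Tuple.monotone_sort (fun j => -ς j) hij
    simpa [hσ] using h
  set f : Fin t → EuclideanSpace ℂ (Fin r) := fun j => col (σ j) with hf
  set g : Fin t → EuclideanSpace ℂ (Fin r) := gramSchmidt ℂ f with hg
  -- the Gram matrix of f is a permuted version of Aᴴ * A
  have hsub : (Matrix.of fun i j : Fin t => (⟪f i, f j⟫ : ℂ)) = (Aᴴ * A).submatrix σ σ := by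
    ext i j
    simp only [Matrix.of_apply, Matrix.submatrix_apply, Matrix.mul_apply,
      Matrix.conjTranspose_apply, hf, hcol, PiLp.inner_apply, RCLike.inner_apply,
      WithLp.equiv_symm_apply, PiLp.toLp_apply, RCLike.star_def, mul_comm]
  have hdet : (Aᴴ * A).det = ((∏ j : Fin t, ‖g j‖ ^ 2 : ℝ) : ℂ) := by
    rw [← Matrix.det_submatrix_equiv_self σ (Aᴴ * A), ← hsub, gram_det]
    push_cast
    rfl
  -- key estimate
  have key : ∀ j : Fin t, max (ς (σ j) - ε) 0 ≤ ‖g j‖ := by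
    intro j
    rcases le_or_gt (ς (σ j)) ε with hle | hgt
    · simpa [max_eq_right (sub_nonpos.2 hle)] using norm_nonneg (g j)
    set c : ℝ := ς (σ j) with hc
    have hc0 : 0 < c := lt_trans hε hgt
    rw [max_eq_left (by linarith)]
    -- step 1 : express `f j - g j` as a combination of previous columns
    have hw : f j - g j ∈ Submodule.span ℂ (f '' Set.Iio j) := by
      have h1 : f j - g j = ∑ i ∈ Finset.Iio j,
          ((Submodule.orthogonalProjectionOnto (ℂ ∙ g i) (f j)) : EuclideanSpace ℂ (Fin r)) := by
        rw [hg, gramSchmidt_def ℂ f j, sub_sub_cancel]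
        simp only [Submodule.starProjection_apply]
      rw [h1]
      refine Submodule.sum_mem _ fun i hi => ?_
      rw [← Submodule.starProjection_apply, Submodule.starProjection_singleton]
      refine Submodule.smul_mem _ _ ?_
      rw [hg, ← span_gramSchmidt_Iio ℂ f j]
      exact Submodule.subset_span ⟨i, Finset.mem_Iio.1 hi, rfl⟩
    rw [Finsupp.mem_span_image_iff_linearCombination] at hw
    obtain ⟨l, hl, hlw⟩ := hw
    rw [Finsupp.mem_supported] at hl
    have hlzero : ∀ k : Fin t, ¬ k < j → l k = 0 := by
      intro k hk
      by_contra h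
      exact hk (hl (Finsupp.mem_support_iff.2 h))
    set x : Fin t → ℂ := fun k => (if k = σ j then 1 else 0) - l (σ.symm k) with hx
    set xE : EuclideanSpace ℂ (Fin t) := (WithLp.equiv 2 (Fin t → ℂ)).symm x with hxE
    have hxσj : x (σ j) = 1 := by
      have : l j = 0 := hlzero j (lt_irrefl j)
      simp [hx, this]
    -- step 2 : `g j = toEuclideanLin A xE`
    have hgx : g j = Matrix.toEuclideanLin A xE := by
      have h2 : Matrix.toEuclideanLin A xE
          = (WithLp.equiv 2 (Fin r → ℂ)).symm (A.mulVec x) :=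
        Matrix.toEuclideanLin_apply_piLp_toLp A x
      have h3 : g j = ∑ k : Fin t, x k • col k := by
        have e1 : ∑ k : Fin t, x k • col k
            = (∑ k : Fin t, (if k = σ j then (1:ℂ) else 0) • col k)
              - ∑ k : Fin t, l (σ.symm k) • col k := by
          rw [← Finset.sum_sub_distrib]
          refine Finset.sum_congr rfl fun k _ => ?_
          rw [hx, sub_smul]
        have e2 : (∑ k : Fin t, (if k = σ j then (1:ℂ) else 0) • col k) = col (σ j) := by
          rw [Finset.sum_eq_single (σ j)]
          · simp
          · intro k _ hk; simp [hk]
          · intro h; exact absurd (Finset.mem_univ _) h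
        have e3 : ∑ k : Fin t, l (σ.symm k) • col k = f j - g j := by
          rw [← hlw, Finsupp.linearCombination_apply,
            Finsupp.sum_fintype _ _ (fun i => zero_smul ℂ (f i))]
          rw [← Equiv.sum_comp σ (fun k => l (σ.symm k) • col k)]
          refine Finset.sum_congr rfl fun m _ => ?_
          simp [hf]
        rw [e1, e2, e3, hf]
        abel
      rw [h2, h3]
      -- both sides are elements of `EuclideanSpace`, compare coordinatewise
      apply (WithLp.equiv 2 (Fin r → ℂ)).injective
      simp only [Equiv.apply_symm_apply]
      funext i
      have e4 : (WithLp.equiv 2 (Fin r → ℂ)) (∑ k : Fin t, x k • col k)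
          = ∑ k : Fin t, x k • ((WithLp.equiv 2 (Fin r → ℂ)) (col k)) := by
        rw [show ⇑(WithLp.equiv 2 (Fin r → ℂ)) = WithLp.linearEquiv 2 ℂ (Fin r → ℂ) from rfl, map_sum]
        refine Finset.sum_congr rfl fun k _ => _root_.map_smul _ _ _
      rw [e4]
      rw [Finset.sum_apply]
      simp only [Pi.smul_apply, smul_eq_mul, hcol, Equiv.apply_symm_apply]
      rw [Matrix.mulVec, dotProduct]
      exact (Finset.sum_congr rfl fun k _ => mul_comm _ _).symm
    -- step 3 : support of x
    have hsupp : ∀ k : Fin t, x k ≠ 0 → c ≤ ς k := by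
      intro k hk
      by_cases hkj : k = σ j
      · rw [hkj]
      · have hlk : l (σ.symm k) ≠ 0 := by
          intro h0
          apply hk
          simp [hx, hkj, h0]
        have hlt : σ.symm k < j := hl (Finsupp.mem_support_iff.2 hlk)
        have := hmono hlt.le
        rwa [Equiv.apply_symm_apply] at this
    have hrange : ∀ k : Fin t, x k ≠ 0 → (k : ℕ) < r := by
      intro k hk
      by_contra hkr
      have h0 : ς k = 0 := by
        rw [hςdef]
        simp only [diagEntry]; rw [dif_neg]
        intro hcon
        exact hkr hcon.1
      have := hsupp k hk
      rw [h0] at this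
      linarith
    -- step 4 : 1 ≤ ‖xE‖
    have hxnorm : 1 ≤ ‖xE‖ := by
      rw [EuclideanSpace.norm_eq]
      have h1 : (1:ℝ) ≤ ∑ k : Fin t, ‖xE k‖ ^ 2 := by
        have h2 : ‖xE (σ j)‖ ^ 2 = 1 := by
          rw [hxE, WithLp.equiv_symm_apply, PiLp.toLp_apply, hxσj]
          norm_num
        calc (1:ℝ) = ‖xE (σ j)‖ ^ 2 := h2.symm
          _ ≤ ∑ k : Fin t, ‖xE k‖ ^ 2 :=
            Finset.single_le_sum (f := fun k => ‖xE k‖ ^ 2)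
              (fun k _ => sq_nonneg _) (Finset.mem_univ (σ j))
      calc (1:ℝ) = Real.sqrt 1 := Real.sqrt_one.symm
        _ ≤ _ := Real.sqrt_le_sqrt h1
    -- step 5 : ‖Δ xE‖ ≤ ε ‖xE‖
    have hΔx : ‖Matrix.toEuclideanLin Δ xE‖ ≤ ε * ‖xE‖ := by
      have h := (LinearMap.toContinuousLinearMap (Matrix.toEuclideanLin Δ)).le_opNorm xE
      rw [LinearMap.coe_toContinuousLinearMap'] at h
      calc ‖Matrix.toEuclideanLin Δ xE‖ ≤ specNorm Δ * ‖xE‖ := h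
        _ ≤ ε * ‖xE‖ := by
          apply mul_le_mul_of_nonneg_right hΔ (norm_nonneg _)
    -- step 6 : c ‖xE‖ ≤ ‖SigC xE‖
    have hSx : c * ‖xE‖ ≤ ‖Matrix.toEuclideanLin SigC xE‖ := by
      have hSv : ∀ i : Fin r, (SigC.mulVec x) i
          = if h : (i:ℕ) < t then ((Sig i ⟨(i:ℕ), h⟩ : ℝ) : ℂ) * x ⟨(i:ℕ), h⟩ else 0 := by
        intro i
        rw [Matrix.mulVec, dotProduct]
        by_cases h : (i:ℕ) < t
        · rw [dif_pos h]
          rw [Finset.sum_eq_single (⟨(i:ℕ), h⟩ : Fin t)]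
          · simp [SigC]
          · intro k _ hk
            have hne : (i:ℕ) ≠ (k:ℕ) := by
              intro hcon
              exact hk (Fin.ext hcon.symm)
            simp [SigC, Matrix.map_apply, hSdiag i k hne]
          · intro h'; exact absurd (Finset.mem_univ _) h'
        · rw [dif_neg h]
          refine Finset.sum_eq_zero fun k _ => ?_
          have hne : (i:ℕ) ≠ (k:ℕ) := by
            intro hcon
            exact h (hcon ▸ k.isLt)
          simp [SigC, Matrix.map_apply, hSdiag i k hne]
      have hsum : c ^ 2 * (∑ k : Fin t, ‖x k‖ ^ 2)
          ≤ ∑ i : Fin r, ‖(SigC.mulVec x) i‖ ^ 2 := by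
        set ψ : ℕ → ℝ := fun n => (diagEntry Sig n) ^ 2
          * (if h : n < t then ‖x ⟨n, h⟩‖ ^ 2 else 0) with hψ
        set ψ' : ℕ → ℝ := fun n => if h : n < r then ‖(SigC.mulVec x) ⟨n, h⟩‖ ^ 2 else 0 with hψ'
        have hstep1 : c ^ 2 * (∑ k : Fin t, ‖x k‖ ^ 2) ≤ ∑ k : Fin t, ς k ^ 2 * ‖x k‖ ^ 2 := by
          rw [Finset.mul_sum]
          refine Finset.sum_le_sum fun k _ => ?_
          by_cases hk : x k = 0
          · simp [hk]
          · have h1 := hsupp k hk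
            have h2 : c ^ 2 ≤ ς k ^ 2 := by nlinarith
            exact mul_le_mul_of_nonneg_right h2 (sq_nonneg _)
        have hstep2 : ∑ k : Fin t, ς k ^ 2 * ‖x k‖ ^ 2 = ∑ n ∈ Finset.range t, ψ n := by
          rw [← Fin.sum_univ_eq_sum_range ψ t]
          refine Finset.sum_congr rfl fun k _ => ?_
          simp only [hψ]
          rw [dif_pos k.isLt]
        have hstep3 : ∑ i : Fin r, ‖(SigC.mulVec x) i‖ ^ 2 = ∑ n ∈ Finset.range r, ψ' n := by
          rw [← Fin.sum_univ_eq_sum_range ψ' r]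
          refine Finset.sum_congr rfl fun i _ => ?_
          simp only [hψ']
          rw [dif_pos i.isLt]
        have hψnonneg : ∀ n, 0 ≤ ψ' n := by
          intro n
          simp only [hψ']
          by_cases h : n < r
          · rw [dif_pos h]; positivity
          · rw [dif_neg h]
        have hstep4 : ∀ n, ψ n ≤ ψ' n := by
          intro n
          by_cases hnr : n < r
          · by_cases hnt : n < t
            · have heq : ψ' n = ψ n := by
                have hv := hSv ⟨n, hnr⟩
                simp only [Fin.val_mk] at hv
                simp only [hψ', hψ]
                rw [dif_pos hnr, dif_pos hnt, hv, dif_pos hnt,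
                  diagEntry, dif_pos (show n < r ∧ n < t from ⟨hnr, hnt⟩)]
                rw [norm_mul, mul_pow, Complex.norm_real, Real.norm_eq_abs, sq_abs]
              rw [heq]
            · have : ψ n = 0 := by simp only [hψ]; rw [dif_neg hnt, mul_zero]
              rw [this]; exact hψnonneg n
          · have : ψ n = 0 := by
              simp only [hψ]
              have h0 : diagEntry Sig n = 0 := by
                simp only [diagEntry]; rw [dif_neg]; intro hcon; exact hnr hcon.1
              rw [h0]
              ring
            rw [this]; exact hψnonneg n
        have hstep5 : ∑ n ∈ Finset.range t, ψ n ≤ ∑ n ∈ Finset.range r, ψ' n := by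
          calc ∑ n ∈ Finset.range t, ψ n ≤ ∑ n ∈ Finset.range t, (if n < r then ψ' n else 0) := by
                refine Finset.sum_le_sum fun n _ => ?_
                by_cases h : n < r
                · rw [if_pos h]; exact hstep4 n
                · rw [if_neg h]
                  have : ψ n = 0 := by
                    simp only [hψ]
                    have h0 : diagEntry Sig n = 0 := by
                      simp only [diagEntry]; rw [dif_neg]; intro hcon; exact h hcon.1
                    rw [h0]; ring
                  rw [this]
            _ = ∑ n ∈ (Finset.range t).filter (· < r), ψ' n := by rw [Finset.sum_filter]
            _ ≤ ∑ n ∈ Finset.range r, ψ' n := by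
                refine Finset.sum_le_sum_of_subset_of_nonneg ?_ fun n _ _ => hψnonneg n
                intro n hn
                rw [Finset.mem_filter] at hn
                exact Finset.mem_range.2 hn.2
        calc c ^ 2 * (∑ k : Fin t, ‖x k‖ ^ 2) ≤ ∑ k : Fin t, ς k ^ 2 * ‖x k‖ ^ 2 := hstep1
          _ = ∑ n ∈ Finset.range t, ψ n := hstep2
          _ ≤ ∑ n ∈ Finset.range r, ψ' n := hstep5
          _ = ∑ i : Fin r, ‖(SigC.mulVec x) i‖ ^ 2 := hstep3.symm
      have hTS : Matrix.toEuclideanLin SigC xE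
          = (WithLp.equiv 2 (Fin r → ℂ)).symm (SigC.mulVec x) :=
        Matrix.toEuclideanLin_apply_piLp_toLp SigC x
      have hnx : ‖xE‖ = Real.sqrt (∑ k : Fin t, ‖x k‖ ^ 2) := by
        rw [EuclideanSpace.norm_eq]
        congr 1
      have hnS : ‖Matrix.toEuclideanLin SigC xE‖
          = Real.sqrt (∑ i : Fin r, ‖(SigC.mulVec x) i‖ ^ 2) := by
        rw [hTS, EuclideanSpace.norm_eq]
        congr 1
      rw [hnx, hnS]
      rw [← Real.sqrt_sq hc0.le, ← Real.sqrt_mul (sq_nonneg c)]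
      exact Real.sqrt_le_sqrt hsum
    -- step 7 : assemble
    have hsplit : Matrix.toEuclideanLin A xE
        = Matrix.toEuclideanLin SigC xE + Matrix.toEuclideanLin Δ xE := by
      have hm : Matrix.toEuclideanLin (SigC + Δ)
          = Matrix.toEuclideanLin SigC + Matrix.toEuclideanLin Δ :=
        map_add Matrix.toEuclideanLin SigC Δ
      rw [hA, hm, LinearMap.add_apply]
    have htri : ‖Matrix.toEuclideanLin SigC xE‖
        ≤ ‖Matrix.toEuclideanLin A xE‖ + ‖Matrix.toEuclideanLin Δ xE‖ := by
      have h9 : Matrix.toEuclideanLin SigC xE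
          = Matrix.toEuclideanLin A xE - Matrix.toEuclideanLin Δ xE :=
        eq_sub_of_add_eq hsplit.symm
      rw [h9]
      exact norm_sub_le _ _
    rw [hgx]
    have hnn : (0:ℝ) ≤ ‖Matrix.toEuclideanLin A xE‖ := norm_nonneg _
    set nA := ‖Matrix.toEuclideanLin A xE‖ with hnA
    set nS := ‖Matrix.toEuclideanLin SigC xE‖ with hnS2
    set nD := ‖Matrix.toEuclideanLin Δ xE‖ with hnD
    set nx := ‖xE‖ with hnx2
    nlinarith [mul_nonneg (sub_nonneg.2 hgt.le) (sub_nonneg.2 hxnorm)]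
  refine ⟨?_, ?_, ?_⟩
  · rw [hdet, Complex.ofReal_re]
    positivity
  · rw [hdet, Complex.ofReal_im]
  · rw [hdet, Complex.ofReal_re]
    calc ∏ j : Fin t, max (diagEntry Sig (j:ℕ) - ε) 0 ^ 2
        = ∏ j : Fin t, max (ς (σ j) - ε) 0 ^ 2 := by
          rw [Equiv.prod_comp σ (fun j => max (ς j - ε) 0 ^ 2)]
      _ ≤ ∏ j : Fin t, ‖g j‖ ^ 2 := by
          refine Finset.prod_le_prod (fun j _ => by positivity) (fun j _ => ?_)
          exact pow_le_pow_left₀ (le_max_right _ _) (key j) 2
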